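/- For N = 2 variables, the operators M_{1,k} = x_1^k · x_1/(x_1−x_2) Γ_1 + x_2^k · x_2/(x_2−x_1) Γ_2 satisfy the commutation relation M_{1,k} M_{1,k'} = q^{k'−k} M_{1,k'} M_{1,k} for all k, k' ∈ ℤ with |k−k'| ≤ 1. -/

import Mathlib

noncomputable section

open MvPolynomial

/-- The base field `ℚ(q^{1/2})`; `sQ` is the square root of `q`. -/
abbrev Rq : Type := RatFunc ℚ

/-- `q^{1/2}`. -/
def sQ : Rq := RatFunc.X

lemma sq_ne_zero : sQ ≠ 0 := RatFunc.X_ne_zero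

/-- The parameter `q`. -/
def qq : Rq := sQ ^ 2

/-- Polynomials in the variables `y_i = x_i^{1/2}`, `i = 1, …, N`. -/
abbrev Pol (N : ℕ) := MvPolynomial (Fin N) Rq

/-- The field of rational functions in `x_1^{1/2}, …, x_N^{1/2}` over `ℚ(q^{1/2})`. -/
abbrev K (N : ℕ) := FractionRing (Pol N)

/-- The substitution `y_j ↦ q^{v_j/2} y_j` on polynomials. -/
def shiftHom (N : ℕ) (v : Fin N → ℤ) : Pol N →ₐ[Rq] Pol N :=
  aeval fun j => C (sQ ^ v j) * X j

/-- The substitution `y_j ↦ q^{v_j/2} y_j` as an algebra automorphism of polynomials. -/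
def shiftEquiv (N : ℕ) (v : Fin N → ℤ) : Pol N ≃ₐ[Rq] Pol N :=
  AlgEquiv.ofAlgHom (shiftHom N v) (shiftHom N (-v))
    (by
      apply MvPolynomial.algHom_ext
      intro j
      simp [shiftHom]
      rw [← mul_assoc, ← C_mul, inv_mul_cancel₀ (zpow_ne_zero _ sq_ne_zero), C_1, one_mul])
    (by
      apply MvPolynomial.algHom_ext
      intro j
      simp [shiftHom]
      rw [← mul_assoc, ← C_mul, mul_inv_cancel₀ (zpow_ne_zero _ sq_ne_zero), C_1, one_mul])

/-- The `q`-shift operator `∏_i Γ_i^{v_i/2}` : the field automorphism of `K N` induced by the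
substitution `y_j = x_j^{1/2} ↦ q^{v_j / 2} y_j`, i.e. `x_j ↦ q^{v_j} x_j`.  In particular
`Γ N (2 • v)` is the honest shift `x_j ↦ q^{v_j} x_j` and half-units allow `Γ_j^{1/2}`. -/
def Γ (N : ℕ) (v : Fin N → ℤ) : K N ≃+* K N :=
  IsFractionRing.ringEquivOfRingEquiv (shiftEquiv N v).toRingEquiv

/-- The square root `y_i = x_i^{1/2}` of the `i`-th variable, inside `K N`. -/
def y (N : ℕ) (i : Fin N) : K N := algebraMap (Pol N) (K N) (X i)

/-- The `i`-th variable `x_i` of `K N`. -/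
def x (N : ℕ) (i : Fin N) : K N := y N i ^ 2

/-- The parameter `q` inside `K N`. -/
def qK (N : ℕ) : K N := algebraMap (Pol N) (K N) (C qq)

end
noncomputable section

/-- The variables of type `A_{N-1}` Macdonald theory: `x_i`, realized as the generators of `K N`. -/
def xA (N : ℕ) (i : Fin N) : K N := y N i

/-- `∏_i Γ_i^{v_i}`, where `Γ_i` is the `q`-shift operator `x_i ↦ q x_i`. -/
def ΓA (N : ℕ) (v : Fin N → ℤ) : K N ≃+* K N := Γ N (2 • v)

/-- The type `A` difference operators
`M_{a,k} = Σ_{I ⊆ [1,N], |I|=a} (Π_{i∈I} x_i)^k Π_{i∈I,j∉I} x_i/(x_i−x_j) Π_{i∈I} Γ_i`. -/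
def MA (N : ℕ) (a : ℕ) (k : ℤ) : K N → K N := fun f =>
  ∑ I ∈ Finset.powersetCard a (Finset.univ : Finset (Fin N)),
    (∏ i ∈ I, xA N i) ^ k *
      ((∏ i ∈ I, ∏ j ∈ Iᶜ, xA N i / (xA N i - xA N j)) *
        ΓA N (fun i => if i ∈ I then 1 else 0) f)

/-- `M_{1,k} = x_1^k·x_1/(x_1−x_2)·Γ_1 + x_2^k·x_2/(x_2−x_1)·Γ_2` for `N = 2`. -/
def M1 (k : ℤ) : K 2 → K 2 := fun f =>
  xA 2 0 ^ k * (xA 2 0 / (xA 2 0 - xA 2 1)) * ΓA 2 ![1, 0] f +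
    xA 2 1 ^ k * (xA 2 1 / (xA 2 1 - xA 2 0)) * ΓA 2 ![0, 1] f


set_option synthInstance.maxHeartbeats 1000000

noncomputable section AuxLemmas
open MvPolynomial

/-- Scalars of `Rq` inside `K 2`. -/
def ψ : Rq →+* K 2 := (algebraMap (Pol 2) (K 2)).comp MvPolynomial.C

lemma Γ_alg (v : Fin 2 → ℤ) (p : Pol 2) :
    Γ 2 v (algebraMap (Pol 2) (K 2) p) = algebraMap (Pol 2) (K 2) (shiftEquiv 2 v p) :=
  IsFractionRing.ringEquivOfRingEquiv_algebraMap _ p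

lemma shiftEquiv_apply (v : Fin 2 → ℤ) (p : Pol 2) :
    shiftEquiv 2 v p = shiftHom 2 v p := rfl

lemma Γ_y (v : Fin 2 → ℤ) (i : Fin 2) : Γ 2 v (y 2 i) = ψ (sQ ^ v i) * y 2 i := by
  rw [y, Γ_alg, shiftEquiv_apply, shiftHom, aeval_X, map_mul]
  rfl

lemma Γ_ψ (v : Fin 2 → ℤ) (c : Rq) : Γ 2 v (ψ c) = ψ c := by
  rw [ψ, RingHom.comp_apply, Γ_alg, shiftEquiv_apply, shiftHom]
  simp [ψ]

lemma shiftHom_shiftHom (v w : Fin 2 → ℤ) (p : Pol 2) :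
    shiftHom 2 v (shiftHom 2 w p) = shiftHom 2 (v + w) p := by
  have : (shiftHom 2 v).comp (shiftHom 2 w) = shiftHom 2 (v + w) := by
    apply MvPolynomial.algHom_ext
    intro j
    simp only [AlgHom.comp_apply, shiftHom, aeval_X, map_mul, aeval_C, algebraMap_eq]
    rw [Pi.add_apply, zpow_add₀ sq_ne_zero, C_mul]
    ring
  exact DFunLike.congr_fun this p

lemma Γ_Γ (v w : Fin 2 → ℤ) (f : K 2) : Γ 2 v (Γ 2 w f) = Γ 2 (v + w) f := by
  obtain ⟨p, q, -, rfl⟩ := IsFractionRing.div_surjective (A := Pol 2) f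
  simp only [map_div₀, Γ_alg, shiftEquiv_apply, shiftHom_shiftHom]

end AuxLemmas

noncomputable section Aux2
open MvPolynomial

lemma ΓA_y10_0 : ΓA 2 ![1, 0] (y 2 0) = ψ qq * y 2 0 := by
  rw [ΓA, Γ_y]
  norm_num [qq]

lemma ΓA_y10_1 : ΓA 2 ![1, 0] (y 2 1) = y 2 1 := by
  rw [ΓA, Γ_y]
  norm_num

lemma ΓA_y01_0 : ΓA 2 ![0, 1] (y 2 0) = y 2 0 := by
  rw [ΓA, Γ_y]
  norm_num

lemma ΓA_y01_1 : ΓA 2 ![0, 1] (y 2 1) = ψ qq * y 2 1 := by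
  rw [ΓA, Γ_y]
  norm_num [qq]

lemma ΓA_ψ (v : Fin 2 → ℤ) (c : Rq) : ΓA 2 v (ψ c) = ψ c := Γ_ψ _ _

lemma ΓA_ΓA (v w : Fin 2 → ℤ) (f : K 2) :
    ΓA 2 v (ΓA 2 w f) = Γ 2 (2 • v + 2 • w) f := Γ_Γ _ _ f

lemma qq_ne : qq ≠ 0 := by simp [qq, sq_ne_zero]

lemma hu_ne : y 2 0 ≠ 0 := by
  rw [y]
  exact (map_ne_zero_iff _ (IsFractionRing.injective _ _)).mpr (X_ne_zero 0)

lemma hv_ne : y 2 1 ≠ 0 := by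
  rw [y]
  exact (map_ne_zero_iff _ (IsFractionRing.injective _ _)).mpr (X_ne_zero 1)

lemma hQ_ne : ψ qq ≠ 0 := by
  rw [ψ, RingHom.comp_apply]
  exact (map_ne_zero_iff _ (IsFractionRing.injective _ _)).mpr (by simp [qq_ne])

lemma polX01 : (X 0 - X 1 : Pol 2) ≠ 0 := by
  intro h
  have := congrArg (coeff (Finsupp.single 0 1)) h
  simp [coeff_X', Finsupp.single_eq_single_iff] at this

lemma polQX01 : (C qq * X 0 - X 1 : Pol 2) ≠ 0 := by
  intro h
  have := congrArg (coeff (Finsupp.single 1 1)) h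
  simp [coeff_X', coeff_C_mul, Finsupp.single_eq_single_iff] at this

lemma polX0Q1 : (X 0 - C qq * X 1 : Pol 2) ≠ 0 := by
  intro h
  have := congrArg (coeff (Finsupp.single 0 1)) h
  simp [coeff_X', coeff_C_mul, Finsupp.single_eq_single_iff] at this

lemma huv_ne : y 2 0 - y 2 1 ≠ 0 := by
  rw [y, y, ← map_sub (algebraMap (Pol 2) (K 2))]
  exact (map_ne_zero_iff _ (IsFractionRing.injective _ _)).mpr polX01

lemma hQuv_ne : ψ qq * y 2 0 - y 2 1 ≠ 0 := by
  rw [ψ, RingHom.comp_apply, y, y, ← map_mul (algebraMap (Pol 2) (K 2)),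
    ← map_sub (algebraMap (Pol 2) (K 2))]
  exact (map_ne_zero_iff _ (IsFractionRing.injective _ _)).mpr polQX01

lemma huQv_ne : y 2 0 - ψ qq * y 2 1 ≠ 0 := by
  rw [ψ, RingHom.comp_apply, y, y, ← map_mul (algebraMap (Pol 2) (K 2)),
    ← map_sub (algebraMap (Pol 2) (K 2))]
  exact (map_ne_zero_iff _ (IsFractionRing.injective _ _)).mpr polX0Q1

lemma qK_eq : qK 2 = ψ qq := rfl

set_option maxHeartbeats 1600000 in
lemma M1_step (k : ℤ) : M1 k ∘ M1 (k + 1) = (qK 2 ^ (1 : ℤ)) • (M1 (k + 1) ∘ M1 k) := by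
  funext f
  simp only [Function.comp_apply, Pi.smul_apply, smul_eq_mul, M1, xA, qK_eq]
  simp only [map_add, map_mul, map_div₀, map_sub, map_zpow₀,
    ΓA_y10_0, ΓA_y10_1, ΓA_y01_0, ΓA_y01_1, ΓA_ΓA]
  rw [show ((2 • ![0, 1] : Fin 2 → ℤ) + 2 • ![1, 0]) = 2 • ![1, 0] + 2 • ![0, 1] from
    add_comm _ _]
  set u := y 2 0 with hu0
  set v := y 2 1 with hv0
  set Q := ψ qq with hQ0
  set A := Γ 2 (2 • ![1, 0] + 2 • ![1, 0]) f with hA0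
  set B := Γ 2 (2 • ![1, 0] + 2 • ![0, 1]) f with hB0
  set D := Γ 2 (2 • ![0, 1] + 2 • ![0, 1]) f with hD0
  have hu : u ≠ 0 := hu_ne
  have hv : v ≠ 0 := hv_ne
  have hQ : Q ≠ 0 := hQ_ne
  have h1 : u - v ≠ 0 := huv_ne
  have h2 : v - u ≠ 0 := sub_ne_zero.mpr (Ne.symm (sub_ne_zero.mp h1))
  have h3 : Q * u - v ≠ 0 := hQuv_ne
  have h4 : v - Q * u ≠ 0 := sub_ne_zero.mpr (Ne.symm (sub_ne_zero.mp h3))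
  have h5 : u - Q * v ≠ 0 := huQv_ne
  have h6 : Q * v - u ≠ 0 := sub_ne_zero.mpr (Ne.symm (sub_ne_zero.mp h5))
  rw [zpow_one]
  simp only [mul_zpow]
  rw [zpow_add_one₀ hu, zpow_add_one₀ hv, zpow_add_one₀ hQ]
  have h7 : u * Q - v ≠ 0 := fun h => h3 (by linear_combination h)
  have h8 : v - u * Q ≠ 0 := fun h => h4 (by linear_combination h)
  have h9 : u - v * Q ≠ 0 := fun h => h5 (by linear_combination h)
  have h10 : v * Q - u ≠ 0 := fun h => h6 (by linear_combination h)
  field_simp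
  ring

end Aux2

/-- for `N = 2`, `M_{1,k} M_{1,k'} = q^{k'−k} M_{1,k'} M_{1,k}` whenever
`|k − k'| ≤ 1`. -/
theorem stmt6 (k k' : ℤ) (h : |k - k'| ≤ 1) :
    M1 k ∘ M1 k' = (qK 2 ^ (k' - k)) • (M1 k' ∘ M1 k) := by
  have hQ : qK 2 ≠ 0 := qK_eq ▸ hQ_ne
  have hcase : k' = k ∨ k' = k + 1 ∨ k = k' + 1 := by
    rcases abs_le.mp h with ⟨ha, hb⟩
    omega
  rcases hcase with rfl | rfl | rfl
  · rw [sub_self, zpow_zero, one_smul]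
  · rw [show k + 1 - k = (1 : ℤ) by ring]
    exact M1_step k
  · rw [M1_step k', show k' - (k' + 1) = (-1 : ℤ) by ring, smul_smul,
      ← zpow_add₀ hQ, show (-1 : ℤ) + 1 = 0 by ring, zpow_zero, one_smul]
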